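/- If two foreground literals of a pure abstracted clause set are unifiable, then their most general unifier is simple and its codomain consists only of variables. -/
import Mathlib


/-- Unification of two flat foreground atoms `P(x₁,…,xₖ)` and `P(y₁,…,yₖ)` of a
pure abstracted clause set: there is a most general unifier `η` whose codomain
consists only of variables. `Term` is an abstract term type containing the
variables via `var`, and `apply δ` is the homomorphic extension of a substitution
`δ` to terms (which on variables acts as `δ`). -/
theorem flat_mgu_variables
    (V Term : Type) (var : V → Term)
    (apply : (V → Term) → Term → Term)
    (happly : ∀ (δ : V → Term) (v : V), apply δ (var v) = δ v)
    (k : ℕ) (xs ys : Fin k → V)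
    (θ : V → Term) (hθ : ∀ i, θ (xs i) = θ (ys i)) :
    ∃ η : V → Term,
      (∀ i, η (xs i) = η (ys i)) ∧
      (∀ θ' : V → Term, (∀ i, θ' (xs i) = θ' (ys i)) →
        ∃ δ : V → Term, ∀ v, θ' v = apply δ (η v)) ∧
      (∀ v : V, ∃ w : V, η v = var w) := by
  classical
  let r : V → V → Prop := fun a b => ∃ i, a = xs i ∧ b = ys i
  let s : Setoid V := Relation.EqvGen.setoid r
  let rep : V → V := fun v => (Quotient.mk s v).out
  have hrep : ∀ v, Relation.EqvGen r (rep v) v := by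
    intro v
    have := Quotient.mk_out (s := s) v
    exact this
  refine ⟨fun v => var (rep v), ?_, ?_, fun v => ⟨rep v, rfl⟩⟩
  · intro i
    have : (Quotient.mk s (xs i)) = Quotient.mk s (ys i) :=
      Quotient.sound (Relation.EqvGen.rel _ _ ⟨i, rfl, rfl⟩)
    simp only [rep, this]
  · intro θ' hθ'
    have key : ∀ a b, Relation.EqvGen r a b → θ' a = θ' b := by
      intro a b h
      induction h with
      | rel a b hab => obtain ⟨i, ha, hb⟩ := hab; subst ha; subst hb; exact hθ' i
      | refl => rfl
      | symm _ _ _ ih => exact ih.symm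
      | trans _ _ _ _ _ ih1 ih2 => exact ih1.trans ih2
    refine ⟨θ', fun v => ?_⟩
    rw [happly]
    exact (key _ _ (hrep v)).symm
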